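/- Verification argument for the finite-horizon optimal control: let Γ be finite, L a transition rate, and ψ : [0,T] × Γ → ℝ a C¹-in-time solution of ∂_t ψ_t(x) + ∑_y (e^{ψ_t(y)−ψ_t(x)} − 1) L(x,y) = 0 with ψ_T = −f for a bounded f ≥ 0. Then for every pair (p, q) with p : [0,T] → probability vectors on Γ absolutely continuous in t, q_t : Γ × Γ → ℝ≥0, satisfying the continuity equation d/dt p_t(x) = ∑_y (q_t(y,x) − q_t(x,y)), p_0 = μ, one has −∑_x ψ_0(x) μ(x) ≤ ∑_x f(x) p_T(x) + ∫_0^T ∑_{x,y} ent(q_t(x,y)/(p_t(x)L(x,y))) p_t(x)L(x,y) dt, with equality when q_t(x,y) = e^{ψ_t(y)−ψ_t(x)} p_t(x) L(x,y). -/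

import Mathlib

open Real Finset MeasureTheory

/-- The entropy function `ent s = s·log s − s + 1`; with Lean's conventions
`Real.log 0 = 0` and `x / 0 = 0` the running-cost integrand below implements
the usual conventions for vanishing reference mass. -/
noncomputable def ent (s : ℝ) : ℝ := s * Real.log s - s + 1

/-- Verification argument for the finite-horizon optimal control problem: if
`ψ` is a `C¹`-in-time solution of the Hamilton–Jacobi equation
`∂_t ψ_t(x) + ∑_y (e^{ψ_t(y)−ψ_t(x)} − 1) L(x,y) = 0` with `ψ_T = −f`,
`f ≥ 0`, then for every admissible density-flux pair `(p,q)` solving the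
continuity equation with `p_0 = μ` (and `q ≪ p⊗L`),
`−∑_x ψ_0(x) μ(x) ≤ ∑_x f(x) p_T(x) + ∫_0^T ∑_{x,y} ent(q/(pL)) pL dt`,
with equality when `q_t(x,y) = e^{ψ_t(y)−ψ_t(x)} p_t(x) L(x,y)`. -/
lemma term_le (ξ Q m : ℝ) (hQ : 0 ≤ Q) (hm : 0 ≤ m) (hz : m = 0 → Q = 0) :
    ξ * Q - (Real.exp ξ - 1) * m ≤ ent (Q / m) * m := by
  rcases hm.eq_or_lt with hm0 | hm0
  · rw [← hm0, hz hm0.symm]; simp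
  · have hQ' : Q = Q / m * m := by field_simp
    set s := Q / m with hs
    have hs0 : 0 ≤ s := div_nonneg hQ hm
    have key : ξ * s ≤ s * Real.log s - s + Real.exp ξ := by
      rcases hs0.eq_or_lt with hs1 | hs1
      · rw [← hs1]; simp [Real.exp_nonneg ξ, (Real.exp_pos ξ).le]
      · have h1 : (ξ - Real.log s) + 1 ≤ Real.exp (ξ - Real.log s) :=
          Real.add_one_le_exp _
        have h2 : Real.exp (ξ - Real.log s) = Real.exp ξ / s := by
          rw [Real.exp_sub, Real.exp_log hs1]
        have := mul_le_mul_of_nonneg_left h1 hs1.le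
        rw [h2] at this
        have h3 : s * (Real.exp ξ / s) = Real.exp ξ := by field_simp
        rw [h3] at this
        nlinarith
    have h4 := mul_le_mul_of_nonneg_right key hm0.le
    rw [hQ']
    unfold ent
    nlinarith [h4]

lemma term_eq (ξ m : ℝ) (hm : 0 ≤ m) :
    ξ * (Real.exp ξ * m) - (Real.exp ξ - 1) * m = ent ((Real.exp ξ * m) / m) * m := by
  rcases hm.eq_or_lt with hm0 | hm0
  · rw [← hm0]; ring
  · rw [mul_div_assoc, div_self hm0.ne', mul_one]
    unfold ent
    rw [Real.log_exp]
    ring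

theorem verification_finite_horizon {Γ : Type*} [Fintype Γ]
    (L : Γ → Γ → ℝ) (hL : ∀ x y, 0 ≤ L x y) (hdiag : ∀ x, L x x = 0)
    (T : ℝ) (hT : 0 < T)
    (f : Γ → ℝ) (hf : ∀ x, 0 ≤ f x)
    (ψ ψ' : ℝ → Γ → ℝ)
    (hψderiv : ∀ t ∈ Set.Icc (0 : ℝ) T, ∀ x,
      HasDerivAt (fun s => ψ s x) (ψ' t x) t)
    (hHJE : ∀ t ∈ Set.Icc (0 : ℝ) T, ∀ x,
      ψ' t x + ∑ y, (Real.exp (ψ t y - ψ t x) - 1) * L x y = 0)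
    (hψT : ∀ x, ψ T x = -f x)
    (μ : Γ → ℝ) (p : ℝ → Γ → ℝ) (q : ℝ → Γ → Γ → ℝ)
    (hp0 : ∀ t ∈ Set.Icc (0 : ℝ) T, ∀ x, 0 ≤ p t x)
    (hp1 : ∀ t ∈ Set.Icc (0 : ℝ) T, ∑ x, p t x = 1)
    (hq0 : ∀ t ∈ Set.Icc (0 : ℝ) T, ∀ x y, 0 ≤ q t x y)
    (hCE : ∀ t ∈ Set.Icc (0 : ℝ) T, ∀ x,
      HasDerivAt (fun s => p s x) (∑ y, (q t y x - q t x y)) t)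
    (hinit : ∀ x, p 0 x = μ x)
    (hAC : ∀ t ∈ Set.Icc (0 : ℝ) T, ∀ x y, p t x * L x y = 0 → q t x y = 0)
    (hInt : IntervalIntegrable
      (fun t => ∑ x, ∑ y, ent (q t x y / (p t x * L x y)) * (p t x * L x y))
      volume 0 T) :
    (-(∑ x, ψ 0 x * μ x) ≤ ∑ x, f x * p T x +
      ∫ t in (0 : ℝ)..T,
        ∑ x, ∑ y, ent (q t x y / (p t x * L x y)) * (p t x * L x y)) ∧
    ((∀ t ∈ Set.Icc (0 : ℝ) T, ∀ x y,
        q t x y = Real.exp (ψ t y - ψ t x) * p t x * L x y) →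
      -(∑ x, ψ 0 x * μ x) = ∑ x, f x * p T x +
        ∫ t in (0 : ℝ)..T,
          ∑ x, ∑ y, ent (q t x y / (p t x * L x y)) * (p t x * L x y)) := by
  set c : ℝ → ℝ := fun t => ∑ x, ∑ y, ent (q t x y / (p t x * L x y)) * (p t x * L x y)
    with hc
  set g : ℝ → ℝ := fun t => ∑ x, ψ t x * p t x with hg
  set g' : ℝ → ℝ := fun t => ∑ x, (ψ' t x * p t x + ψ t x * ∑ y, (q t y x - q t x y))
    with hg'
  have hgderiv : ∀ t ∈ Set.Icc (0 : ℝ) T, HasDerivAt g (g' t) t := by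
    intro t ht
    exact HasDerivAt.fun_sum fun x _ => (hψderiv t ht x).mul (hCE t ht x)
  -- rewrite g' in pairwise form
  have hkey : ∀ t ∈ Set.Icc (0 : ℝ) T, g' t =
      ∑ x, ∑ y, ((ψ t y - ψ t x) * q t x y
        - (Real.exp (ψ t y - ψ t x) - 1) * (p t x * L x y)) := by
    intro t ht
    have hψ'eq : ∀ x, ψ' t x = -∑ y, (Real.exp (ψ t y - ψ t x) - 1) * L x y :=
      fun x => eq_neg_of_add_eq_zero_left (hHJE t ht x)
    have hx : ∀ x, ψ' t x * p t x + ψ t x * ∑ y, (q t y x - q t x y)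
        = ∑ y, (ψ t x * q t y x
            + (-(ψ t x * q t x y)
              - (Real.exp (ψ t y - ψ t x) - 1) * (p t x * L x y))) := by
      intro x
      rw [hψ'eq x, neg_mul, Finset.sum_mul, Finset.mul_sum, neg_add_eq_sub,
        ← Finset.sum_sub_distrib]
      refine Finset.sum_congr rfl fun y _ => ?_
      ring
    have hswap : ∑ x, ∑ y, ψ t x * q t y x = ∑ x, ∑ y, ψ t y * q t x y :=
      Finset.sum_comm
    rw [hg']
    simp only [hx]
    simp only [Finset.sum_add_distrib]
    rw [hswap, ← Finset.sum_add_distrib]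
    refine Finset.sum_congr rfl fun x _ => ?_
    rw [← Finset.sum_add_distrib]
    refine Finset.sum_congr rfl fun y _ => ?_
    ring
  -- boundary values
  have h0T : (0:ℝ) ∈ Set.Icc (0:ℝ) T := ⟨le_refl 0, hT.le⟩
  have hTT : T ∈ Set.Icc (0:ℝ) T := ⟨hT.le, le_refl T⟩
  have hg0 : g 0 = ∑ x, ψ 0 x * μ x := by
    simp only [hg]
    exact Finset.sum_congr rfl fun x _ => by rw [hinit x]
  have hgT : g T = -∑ x, f x * p T x := by
    simp only [hg, ← Finset.sum_neg_distrib]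
    refine Finset.sum_congr rfl fun x _ => by rw [hψT x]; ring
  have hcont : ContinuousOn g (Set.Icc 0 T) := fun t ht =>
    (hgderiv t ht).continuousAt.continuousWithinAt
  have hIntOn : IntegrableOn c (Set.Icc 0 T) volume := by
    rw [integrableOn_Icc_iff_integrableOn_Ioc]
    exact (intervalIntegrable_iff_integrableOn_Ioc_of_le hT.le).mp hInt
  constructor
  · -- inequality
    have hle : ∀ t ∈ Set.Ioo (0:ℝ) T, g' t ≤ c t := by
      intro t ht
      have ht' : t ∈ Set.Icc (0:ℝ) T := Set.Ioo_subset_Icc_self ht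
      rw [hkey t ht', hc]
      refine Finset.sum_le_sum fun x _ => Finset.sum_le_sum fun y _ => ?_
      exact term_le _ _ _ (hq0 t ht' x y)
        (mul_nonneg (hp0 t ht' x) (hL x y)) (hAC t ht' x y)
    have hmain := intervalIntegral.sub_le_integral_of_hasDeriv_right_of_le hT.le hcont
      (fun t ht => ((hgderiv t (Set.Ioo_subset_Icc_self ht)).hasDerivWithinAt)) hIntOn hle
    rw [hg0, hgT] at hmain
    linarith
  · -- equality
    intro hopt
    have heq : ∀ t ∈ Set.uIcc (0:ℝ) T, HasDerivAt g (c t) t := by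
      intro t ht
      rw [Set.uIcc_of_le hT.le] at ht
      have h1 : g' t = c t := by
        rw [hkey t ht, hc]
        refine Finset.sum_congr rfl fun x _ => Finset.sum_congr rfl fun y _ => ?_
        rw [hopt t ht x y, mul_assoc]
        exact term_eq _ _ (mul_nonneg (hp0 t ht x) (hL x y))
      rw [← h1]
      exact hgderiv t ht
    have hmain := intervalIntegral.integral_eq_sub_of_hasDerivAt heq hInt
    rw [hg0, hgT] at hmain
    linarith
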